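/- The permutation 52341 is not sortable on a deque. -/

import Mathlib

/-- State of a deque switchyard: output so far, the deque, remaining input. -/
structure DState where
  output : List ℕ
  deque : List ℕ
  input : List ℕ

/-- One step of deque sorting: push the next input element to either end of the
deque, or pop either end element of the deque to the output. -/
inductive DequeStep : DState → DState → Prop
  | pushLeft (o d i : List ℕ) (x : ℕ) : DequeStep ⟨o, d, x :: i⟩ ⟨o, x :: d, i⟩
  | pushRight (o d i : List ℕ) (x : ℕ) : DequeStep ⟨o, d, x :: i⟩ ⟨o, d ++ [x], i⟩
  | popLeft (o d i : List ℕ) (x : ℕ) : DequeStep ⟨o, x :: d, i⟩ ⟨o ++ [x], d, i⟩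
  | popRight (o d i : List ℕ) (x : ℕ) : DequeStep ⟨o, d ++ [x], i⟩ ⟨o ++ [x], d, i⟩

/-- A permutation (as a list) is deque-sortable if some run outputs `1, 2, …, n`. -/
def DequeSortable (l : List ℕ) : Prop :=
  Relation.ReflTransGen DequeStep ⟨[], [], l⟩ ⟨List.range' 1 l.length, [], []⟩

deriving instance DecidableEq for DState

/-- All successors of a state. -/
def succs : DState → List DState
  | ⟨o, d, i⟩ =>
    (match i with
     | [] => []
     | x :: i' => [⟨o, x :: d, i'⟩, ⟨o, d ++ [x], i'⟩]) ++
    (match d with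
     | [] => []
     | x :: d' => [⟨o ++ [x], d', i⟩]) ++
    (if h : d = [] then [] else [⟨o ++ [d.getLast h], d.dropLast, i⟩])

lemma mem_succs {s t : DState} (h : DequeStep s t) : t ∈ succs s := by
  cases h with
  | pushLeft o d i x => simp [succs]
  | pushRight o d i x => simp [succs]
  | popLeft o d i x => simp [succs]
  | popRight o d i x =>
      simp only [succs, dif_neg (List.append_ne_nil_of_right_ne_nil d (by simp : [x] ≠ [])),
        List.getLast_append, List.dropLast_concat, List.mem_append, List.mem_singleton]
      right; rfl

def meas (s : DState) : ℕ := 2 * s.input.length + s.deque.length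

lemma step_meas {s t : DState} (h : DequeStep s t) : meas t + 1 = meas s := by
  cases h <;> simp [meas] <;> omega

def frontiers : ℕ → List DState → List DState
  | 0, f => f
  | n + 1, f => f ++ frontiers n ((f.flatMap succs).dedup)

lemma mem_frontiers : ∀ (n : ℕ) (f : List DState) (s t : DState),
    s ∈ f → Relation.ReflTransGen DequeStep s t → meas s ≤ n → t ∈ frontiers n f := by
  intro n
  induction n with
  | zero =>
      intro f s t hsf h hm
      rcases h.cases_head with rfl | ⟨u, hs, _⟩
      · simpa [frontiers] using hsf
      · have := step_meas hs; omega
  | succ n ih =>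
      intro f s t hsf h hm
      rcases h.cases_head with rfl | ⟨u, hs, hu⟩
      · simp only [frontiers, List.mem_append]; exact Or.inl hsf
      · have hmeas := step_meas hs
        simp only [frontiers, List.mem_append]
        refine Or.inr (ih _ u t ?_ hu (by omega))
        exact List.mem_dedup.mpr (List.mem_flatMap.mpr ⟨s, hsf, mem_succs hs⟩)

set_option maxRecDepth 100000 in
/-- The permutation 52341 is not sortable on a deque. -/
theorem not_dequeSortable_52341 : ¬ DequeSortable [5, 2, 3, 4, 1] := by
  intro h
  have hm : (⟨List.range' 1 5, [], []⟩ : DState) ∈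
      frontiers 10 [⟨[], [], [5, 2, 3, 4, 1]⟩] :=
    mem_frontiers 10 _ _ _ (by simp) h (by simp [meas])
  exact absurd hm (by decide)
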